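/- Let r ∈ ℝ and let C : [r,∞) → ℝ be continuous. Define φ(t) = ∫_r^t exp(−C(l)) dl, assume ∫_t^∞ exp(C(s)) ds < ∞ for every t ≥ r, and set δ := sup_{t ≥ r} φ(t)·∫_t^∞ exp(C(s)) ds, assumed finite. Then for every t > r, ∫_r^t exp(−C(l)) · (∫_l^∞ exp(C(s))·√(φ(s)) ds) dl ≤ 4δ·√(φ(t)). -/

import Mathlib

open MeasureTheory

/-- Combined Hardy-type estimate in the proof of the final Corollary of
Section 3.3: with `φ(t) = ∫_r^t exp(-C(l)) dl`, `G(t) = ∫_t^∞ exp(C(s)) ds`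
finite, and `δ = sup_{t ≥ r} φ(t)·G(t)` finite, for every `t > r`,
`∫_r^t exp(-C(l)) (∫_l^∞ exp(C(s))√(φ(s)) ds) dl ≤ 4δ√(φ(t))`. -/
theorem stmt16 (r : ℝ) (C : ℝ → ℝ) (hC : ContinuousOn C (Set.Ici r))
    (hG : ∀ t : ℝ, r ≤ t → IntegrableOn (fun s => Real.exp (C s)) (Set.Ici t) volume)
    (δ : ℝ)
    (hbdd : BddAbove (Set.range fun t : {t : ℝ // r ≤ t} =>
      (∫ l in r..(t : ℝ), Real.exp (-C l)) * ∫ s in Set.Ici (t : ℝ), Real.exp (C s)))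
    (hδ : δ = ⨆ t : {t : ℝ // r ≤ t},
      (∫ l in r..(t : ℝ), Real.exp (-C l)) * ∫ s in Set.Ici (t : ℝ), Real.exp (C s)) :
    ∀ t : ℝ, r < t →
      (∫ l in r..t, Real.exp (-C l) *
          ∫ s in Set.Ici l, Real.exp (C s) * Real.sqrt (∫ u in r..s, Real.exp (-C u)))
        ≤ 4 * δ * Real.sqrt (∫ u in r..t, Real.exp (-C u)) := by
  intro t ht
  have htr : r ≤ t := ht.le
  -- continuous modification of C
  set D : ℝ → ℝ := fun l => C (max l r) with hDdef
  have hDcont : Continuous D :=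
    hC.comp_continuous (continuous_id.max continuous_const) fun x => le_max_right x r
  have hDeq : ∀ x, r ≤ x → D x = C x := by
    intro x hx; simp only [hDdef]; rw [max_eq_left hx]
  set g : ℝ → ℝ := fun s => Real.exp (D s) with hgdef
  set E : ℝ → ℝ := fun l => Real.exp (-D l) with hEdef
  have hgcont : Continuous g := Real.continuous_exp.comp hDcont
  have hEcont : Continuous E := Real.continuous_exp.comp hDcont.neg
  have hgpos : ∀ s, 0 < g s := fun s => Real.exp_pos _
  have hEpos : ∀ s, 0 < E s := fun s => Real.exp_pos _
  set φ : ℝ → ℝ := fun x => ∫ u in r..x, E u with hφdef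
  have hφderiv : ∀ x, HasDerivAt φ (E x) x := fun x =>
    intervalIntegral.integral_hasDerivAt_right (hEcont.intervalIntegrable r x)
      (hEcont.stronglyMeasurableAtFilter volume (nhds x)) hEcont.continuousAt
  have hφcont : Continuous φ := continuous_iff_continuousAt.2 fun x => (hφderiv x).continuousAt
  have hφeq : ∀ x, r ≤ x → (∫ u in r..x, Real.exp (-C u)) = φ x := by
    intro x hx
    apply intervalIntegral.integral_congr
    intro u hu
    rw [Set.uIcc_of_le hx] at hu
    simp only [hEdef]
    rw [hDeq u hu.1]
  have hφr : φ r = 0 := intervalIntegral.integral_same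
  have hφmono : ∀ a b : ℝ, a ≤ b → φ a ≤ φ b := by
    intro a b hab
    have h1 : φ a + (∫ u in a..b, E u) = φ b :=
      intervalIntegral.integral_add_adjacent_intervals
        (hEcont.intervalIntegrable r a) (hEcont.intervalIntegrable a b)
    have h2 : 0 ≤ ∫ u in a..b, E u :=
      intervalIntegral.integral_nonneg hab fun u _ => (hEpos u).le
    linarith
  have hφnonneg : ∀ x, r ≤ x → 0 ≤ φ x := by
    intro x hx; have := hφmono r x hx; linarith [hφr]
  have hφpos : ∀ x, r < x → 0 < φ x := fun x hx =>
    intervalIntegral.intervalIntegral_pos_of_pos (hEcont.intervalIntegrable r x) hEpos hx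
  -- integrability of g on half-lines
  have hgint_r : IntegrableOn g (Set.Ici r) := by
    apply (hG r le_rfl).congr_fun ?_ measurableSet_Ici
    intro s hs
    simp only [hgdef]
    rw [hDeq s hs]
  have hgint : ∀ l, r ≤ l → IntegrableOn g (Set.Ici l) := fun l hl =>
    hgint_r.mono_set (Set.Ici_subset_Ici.mpr hl)
  -- splitting lemma for integrals over half-lines
  have hsplit : ∀ (f : ℝ → ℝ) (a : ℝ), IntegrableOn f (Set.Ici a) volume → ∀ l, a ≤ l →
      (∫ s in Set.Ici l, f s) = (∫ s in Set.Ici a, f s) - ∫ s in a..l, f s := by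
    intro f a hf l hl
    have hu : Set.Ioc a l ∪ Set.Ioi l = Set.Ioi a := Set.Ioc_union_Ioi_eq_Ioi hl
    have h1 : (∫ s in Set.Ici a, f s) = (∫ s in Set.Ioc a l, f s) + ∫ s in Set.Ioi l, f s := by
      rw [integral_Ici_eq_integral_Ioi, ← hu,
        setIntegral_union (Set.Ioc_disjoint_Ioi le_rfl) measurableSet_Ioi
          (hf.mono_set (Set.Ioc_subset_Icc_self.trans Set.Icc_subset_Ici_self))
          (hf.mono_set (Set.Ioi_subset_Ici_self.trans (Set.Ici_subset_Ici.mpr hl)))]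
    rw [integral_Ici_eq_integral_Ioi, intervalIntegral.integral_of_le hl]
    linarith
  set G : ℝ → ℝ := fun l => ∫ s in Set.Ici l, g s with hGdef
  have hGeq : ∀ l, r ≤ l → G l = G r - ∫ s in r..l, g s := fun l hl =>
    hsplit g r hgint_r l hl
  have hGnonneg : ∀ l, 0 ≤ G l := fun l =>
    setIntegral_nonneg measurableSet_Ici fun s _ => (hgpos s).le
  have hGpos : ∀ l, r ≤ l → 0 < G l := by
    intro l hl
    have h1 : (0:ℝ) < ∫ s in l..(l+1), g s :=
      intervalIntegral.intervalIntegral_pos_of_pos (hgcont.intervalIntegrable _ _) hgpos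
        (by linarith)
    have h2 : G (l+1) = G l - ∫ s in l..(l+1), g s := hsplit g l (hgint l hl) (l+1) (by linarith)
    have h3 : 0 ≤ G (l+1) := hGnonneg _
    simp only [hGdef] at h2 h3 ⊢
    linarith
  have hGderiv : ∀ x, r < x → HasDerivAt G (-g x) x := by
    intro x hx
    have h1 : HasDerivAt (fun l => G r - ∫ s in r..l, g s) (-g x) x := by
      have h2 : HasDerivAt (fun l => ∫ s in r..l, g s) (g x) x :=
        intervalIntegral.integral_hasDerivAt_right (hgcont.intervalIntegrable r x)
          (hgcont.stronglyMeasurableAtFilter volume (nhds x)) hgcont.continuousAt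
      simpa using h2.const_sub (G r)
    apply h1.congr_of_eventuallyEq
    filter_upwards [IsOpen.mem_nhds isOpen_Ioi hx] with y hy
    exact hGeq y (le_of_lt hy)
  -- the sup bound
  have hδge : ∀ s, r ≤ s → φ s * G s ≤ δ := by
    intro s hs
    have h1 := le_ciSup hbdd (⟨s, hs⟩ : {t : ℝ // r ≤ t})
    rw [← hδ] at h1
    have h2 : (∫ l in r..s, Real.exp (-C l)) = φ s := hφeq s hs
    have h3 : (∫ x in Set.Ici s, Real.exp (C x)) = G s := by
      apply setIntegral_congr_fun measurableSet_Ici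
      intro x hx
      simp only [hgdef]
      rw [hDeq x (le_trans hs hx)]
    simpa [h2, h3] using h1
  have hδ0 : 0 ≤ δ := by
    have := hδge r le_rfl
    rw [hφr, zero_mul] at this; exact this
  have hsqrt : ∀ s, r ≤ s → Real.sqrt (φ s) * Real.sqrt (G s) ≤ Real.sqrt δ := by
    intro s hs
    rw [← Real.sqrt_mul (hφnonneg s hs)]
    exact Real.sqrt_le_sqrt (hδge s hs)
  -- the comparison function ψ
  set ψ : ℝ → ℝ := fun u => g u / Real.sqrt (G u) with hψdef
  have hψ0 : ∀ u, 0 ≤ ψ u := fun u => div_nonneg (hgpos u).le (Real.sqrt_nonneg _)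
  have hψcont : ∀ x, r < x → ContinuousAt ψ x := by
    intro x hx
    exact (hgcont.continuousAt).div
      (Real.continuous_sqrt.continuousAt.comp (hGderiv x hx).continuousAt)
      (Real.sqrt_pos.mpr (hGpos x hx.le)).ne'
  have hψFTC : ∀ l T, r < l → l ≤ T →
      (∫ u in l..T, ψ u) = 2 * Real.sqrt (G l) - 2 * Real.sqrt (G T) := by
    intro l T hl hlT
    have key : ∀ u ∈ Set.uIcc l T, HasDerivAt (fun x => -2 * Real.sqrt (G x)) (ψ u) u := by
      intro u hu
      rw [Set.uIcc_of_le hlT] at hu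
      have hur : r < u := lt_of_lt_of_le hl hu.1
      have h1 : HasDerivAt (fun x => Real.sqrt (G x)) (-g u / (2 * Real.sqrt (G u))) u :=
        (hGderiv u hur).sqrt (hGpos u hur.le).ne'
      have h2 := h1.const_mul (-2 : ℝ)
      refine h2.congr_deriv ?_
      have h3 : Real.sqrt (G u) ≠ 0 := (Real.sqrt_pos.mpr (hGpos u hur.le)).ne'
      simp only [hψdef]
      field_simp
    have hInt : IntervalIntegrable ψ volume l T := by
      apply ContinuousOn.intervalIntegrable
      intro u hu
      rw [Set.uIcc_of_le hlT] at hu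
      exact (hψcont u (lt_of_lt_of_le hl hu.1)).continuousWithinAt
    rw [intervalIntegral.integral_eq_sub_of_hasDerivAt key hInt]
    ring
  have hψbound : ∀ l, r < l → IntegrableOn ψ (Set.Ici l) ∧
      (∫ u in Set.Ici l, ψ u) ≤ 2 * Real.sqrt (G l) := by
    intro l hl
    have hfi : ∀ i : ℝ, IntegrableOn ψ (Set.Ioc l i) := by
      intro i
      rcases le_or_gt i l with h | h
      · rw [Set.Ioc_eq_empty (not_lt.mpr h)]; exact integrableOn_empty
      · have hcOn : ContinuousOn ψ (Set.uIcc l i) := by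
          intro u hu
          rw [Set.uIcc_of_le h.le] at hu
          exact (hψcont u (lt_of_lt_of_le hl hu.1)).continuousWithinAt
        exact hcOn.intervalIntegrable.1
    have hbnd : ∀ᶠ i : ℝ in Filter.atTop, (∫ x in l..i, ‖ψ x‖) ≤ 2 * Real.sqrt (G l) := by
      filter_upwards [Filter.eventually_ge_atTop l] with i hi
      have he : (∫ x in l..i, ‖ψ x‖) = ∫ x in l..i, ψ x :=
        intervalIntegral.integral_congr fun x _ => Real.norm_of_nonneg (hψ0 x)
      rw [he, hψFTC l i hl hi]
      linarith [Real.sqrt_nonneg (G i)]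
    have hIoi : IntegrableOn ψ (Set.Ioi l) :=
      integrableOn_Ioi_of_intervalIntegral_norm_bounded (2 * Real.sqrt (G l)) l hfi
        Filter.tendsto_id hbnd
    have hIci : IntegrableOn ψ (Set.Ici l) := (integrableOn_Ici_iff_integrableOn_Ioi).mpr hIoi
    refine ⟨hIci, ?_⟩
    rw [integral_Ici_eq_integral_Ioi]
    apply le_of_tendsto (intervalIntegral_tendsto_integral_Ioi l hIoi Filter.tendsto_id)
    filter_upwards [Filter.eventually_ge_atTop l] with i hi
    simp only [id_eq]
    rw [hψFTC l i hl hi]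
    linarith [Real.sqrt_nonneg (G i)]
  -- the inner integrand q
  set q : ℝ → ℝ := fun s => g s * Real.sqrt (φ s) with hqdef
  have hqcont : Continuous q := hgcont.mul (Real.continuous_sqrt.comp hφcont)
  have hq0 : ∀ s, 0 ≤ q s := fun s => mul_nonneg (hgpos s).le (Real.sqrt_nonneg _)
  have hqle : ∀ s, r ≤ s → q s ≤ Real.sqrt δ * ψ s := by
    intro s hs
    have h1 := hsqrt s hs
    have h2 : Real.sqrt (φ s) ≤ Real.sqrt δ / Real.sqrt (G s) :=
      (le_div_iff₀ (Real.sqrt_pos.mpr (hGpos s hs))).mpr h1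
    calc q s = g s * Real.sqrt (φ s) := rfl
      _ ≤ g s * (Real.sqrt δ / Real.sqrt (G s)) :=
          mul_le_mul_of_nonneg_left h2 (hgpos s).le
      _ = Real.sqrt δ * ψ s := by simp only [hψdef]; ring
  have hqint : ∀ l, r < l → IntegrableOn q (Set.Ici l) := by
    intro l hl
    apply Integrable.mono' (((hψbound l hl).1).const_mul (Real.sqrt δ))
      hqcont.aestronglyMeasurable.restrict
    filter_upwards [ae_restrict_mem measurableSet_Ici] with s hs
    rw [Real.norm_of_nonneg (hq0 s)]
    exact hqle s (le_trans hl.le hs)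
  have hqbound : ∀ l, r < l → (∫ s in Set.Ici l, q s) ≤ 2 * δ / Real.sqrt (φ l) := by
    intro l hl
    have h1 : (∫ s in Set.Ici l, q s) ≤ ∫ s in Set.Ici l, Real.sqrt δ * ψ s :=
      setIntegral_mono_on (hqint l hl) (((hψbound l hl).1).const_mul _) measurableSet_Ici
        fun s hs => hqle s (le_trans hl.le hs)
    have h2 : (∫ s in Set.Ici l, Real.sqrt δ * ψ s) = Real.sqrt δ * ∫ s in Set.Ici l, ψ s :=
      integral_const_mul _ _
    have h3 := (hψbound l hl).2
    have h4 : Real.sqrt δ * (2 * Real.sqrt (G l)) ≤ 2 * δ / Real.sqrt (φ l) := by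
      have hsφ : 0 < Real.sqrt (φ l) := Real.sqrt_pos.mpr (hφpos l hl)
      rw [le_div_iff₀ hsφ]
      have h5 := hsqrt l hl.le
      have h6 : Real.sqrt δ * Real.sqrt δ = δ := Real.mul_self_sqrt hδ0
      nlinarith [Real.sqrt_nonneg δ, Real.sqrt_nonneg (G l), Real.sqrt_nonneg (φ l)]
    have h7 : Real.sqrt δ * (∫ s in Set.Ici l, ψ s) ≤ Real.sqrt δ * (2 * Real.sqrt (G l)) :=
      mul_le_mul_of_nonneg_left h3 (Real.sqrt_nonneg δ)
    linarith [h2 ▸ h1]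
  have hqint_r : IntegrableOn q (Set.Ici r) := by
    have h1 : IntegrableOn q (Set.Icc r (r+1)) := hqcont.integrableOn_Icc
    have h2 := hqint (r+1) (by linarith)
    have h3 : Set.Icc r (r+1) ∪ Set.Ici (r+1) = Set.Ici r :=
      Set.Icc_union_Ici_eq_Ici (by linarith)
    rw [← h3]; exact h1.union h2
  set Φ : ℝ → ℝ := fun l => ∫ s in Set.Ici l, q s with hΦdef
  have hΦeq : ∀ l, r ≤ l → Φ l = Φ r - ∫ s in r..l, q s := fun l hl =>
    hsplit q r hqint_r l hl
  have hΦcont : ContinuousOn Φ (Set.Icc r t) := by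
    have hd : ∀ x, HasDerivAt (fun l => ∫ s in r..l, q s) (q x) x := fun x =>
      intervalIntegral.integral_hasDerivAt_right (hqcont.intervalIntegrable r x)
        (hqcont.stronglyMeasurableAtFilter volume (nhds x)) hqcont.continuousAt
    have hprim : Continuous fun l => Φ r - ∫ s in r..l, q s :=
      continuous_const.sub (continuous_iff_continuousAt.2 fun x => (hd x).continuousAt)
    exact hprim.continuousOn.congr fun l hl => hΦeq l hl.1
  have hΦnonneg : ∀ l, 0 ≤ Φ l := fun l =>
    setIntegral_nonneg measurableSet_Ici fun s _ => hq0 s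
  set F : ℝ → ℝ := fun l => E l * Φ l with hFdef
  have hFcont : ContinuousOn F (Set.Icc r t) := hEcont.continuousOn.mul hΦcont
  have hFint : ∀ a b : ℝ, a ∈ Set.Icc r t → b ∈ Set.Icc r t → IntervalIntegrable F volume a b :=
    fun a b ha hb => (hFcont.mono (Set.uIcc_subset_Icc ha hb)).intervalIntegrable
  have hF0 : ∀ l, 0 ≤ F l := fun l => mul_nonneg (hEpos l).le (hΦnonneg l)
  -- main estimate on [a, t] for r < a < t
  have hmain : ∀ a, a ∈ Set.Ioo r t → (∫ l in a..t, F l) ≤ 4 * δ * Real.sqrt (φ t) := by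
    intro a ha
    set ρ : ℝ → ℝ := fun l => E l * (2 * δ / Real.sqrt (φ l)) with hρdef
    have hρcont : ContinuousOn ρ (Set.Icc a t) := by
      apply hEcont.continuousOn.mul
      apply continuousOn_const.div (Real.continuous_sqrt.comp hφcont).continuousOn
      intro x hx
      exact (Real.sqrt_pos.mpr (hφpos x (lt_of_lt_of_le ha.1 hx.1))).ne'
    have hFρ : ∀ l ∈ Set.Icc a t, F l ≤ ρ l := by
      intro l hl
      exact mul_le_mul_of_nonneg_left (hqbound l (lt_of_lt_of_le ha.1 hl.1)) (hEpos l).le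
    have hρInt : IntervalIntegrable ρ volume a t :=
      (hρcont.mono (Set.uIcc_of_le ha.2.le).subset).intervalIntegrable
    have h1 : (∫ l in a..t, F l) ≤ ∫ l in a..t, ρ l :=
      intervalIntegral.integral_mono_on ha.2.le
        (hFint a t ⟨ha.1.le, ha.2.le⟩ ⟨htr, le_rfl⟩) hρInt hFρ
    have h2 : (∫ l in a..t, ρ l) = 4*δ*Real.sqrt (φ t) - 4*δ*Real.sqrt (φ a) := by
      have key : ∀ u ∈ Set.uIcc a t, HasDerivAt (fun x => 4*δ*Real.sqrt (φ x)) (ρ u) u := by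
        intro u hu
        rw [Set.uIcc_of_le ha.2.le] at hu
        have hur : r < u := lt_of_lt_of_le ha.1 hu.1
        have h3 : Real.sqrt (φ u) ≠ 0 := (Real.sqrt_pos.mpr (hφpos u hur)).ne'
        have h4 : HasDerivAt (fun x => Real.sqrt (φ x)) (E u / (2*Real.sqrt (φ u))) u :=
          (hφderiv u).sqrt (hφpos u hur).ne'
        have h5 := h4.const_mul (4*δ)
        refine h5.congr_deriv ?_
        simp only [hρdef]
        field_simp
        ring
      rw [intervalIntegral.integral_eq_sub_of_hasDerivAt key hρInt]
    have h6 : 0 ≤ 4*δ*Real.sqrt (φ a) := by positivity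
    linarith
  -- rewrite the statement in terms of F and φ
  have hLHS : (∫ l in r..t, Real.exp (-C l) *
      ∫ s in Set.Ici l, Real.exp (C s) * Real.sqrt (∫ u in r..s, Real.exp (-C u)))
      = ∫ l in r..t, F l := by
    apply intervalIntegral.integral_congr
    intro l hl
    rw [Set.uIcc_of_le htr] at hl
    have hlr : r ≤ l := hl.1
    have e2 : (∫ s in Set.Ici l, Real.exp (C s) * Real.sqrt (∫ u in r..s, Real.exp (-C u)))
        = Φ l := by
      apply setIntegral_congr_fun measurableSet_Ici
      intro s hs
      have hsr : r ≤ s := le_trans hlr hs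
      simp only [hqdef, hgdef]
      rw [hφeq s hsr, hDeq s hsr]
    simp only [hFdef, hEdef]
    rw [e2, hDeq l hlr]
  rw [hLHS, hφeq t htr]
  -- limiting argument a → r⁺
  obtain ⟨M, hM⟩ := (isCompact_Icc : IsCompact (Set.Icc r t)).exists_bound_of_continuousOn hFcont
  have hM0 : 0 ≤ M := le_trans (norm_nonneg (F r)) (hM r ⟨le_rfl, htr⟩)
  apply le_of_forall_pos_le_add
  intro ε hε
  set a : ℝ := min (r + ε / (M+1)) ((r + t)/2) with hadef
  have hεM : 0 < ε / (M+1) := by positivity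
  have haIoo : a ∈ Set.Ioo r t := by
    constructor
    · apply lt_min (by linarith) (by linarith)
    · exact lt_of_le_of_lt (min_le_right _ _) (by linarith)
  have hsplit2 : (∫ l in r..t, F l) = (∫ l in r..a, F l) + ∫ l in a..t, F l :=
    (intervalIntegral.integral_add_adjacent_intervals
      (hFint r a ⟨le_rfl, htr⟩ ⟨haIoo.1.le, haIoo.2.le⟩)
      (hFint a t ⟨haIoo.1.le, haIoo.2.le⟩ ⟨htr, le_rfl⟩)).symm
  have hb1 : (∫ l in r..a, F l) ≤ ε := by
    have h7 : ‖∫ l in r..a, F l‖ ≤ M * |a - r| := by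
      apply intervalIntegral.norm_integral_le_of_norm_le_const
      intro x hx
      rw [Set.uIoc_of_le haIoo.1.le] at hx
      exact hM x ⟨le_of_lt hx.1, le_trans hx.2 haIoo.2.le⟩
    have h8 : |a - r| ≤ ε/(M+1) := by
      rw [abs_of_nonneg (by linarith [haIoo.1.le])]
      have h9 : a ≤ r + ε/(M+1) := min_le_left _ _
      linarith
    have h10 : M * |a - r| ≤ M * (ε/(M+1)) := mul_le_mul_of_nonneg_left h8 hM0
    have h11 : M * (ε/(M+1)) ≤ ε := by
      rw [mul_div_assoc' M ε (M+1), div_le_iff₀ (by linarith : (0:ℝ) < M+1)]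
      nlinarith
    calc (∫ l in r..a, F l) ≤ ‖∫ l in r..a, F l‖ := le_abs_self _
      _ ≤ ε := by linarith
  linarith [hmain a haIoo, hsplit2, hb1]
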